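/- For any rake G (a graph P_{n,k} with some loops attached) and any configuration x of G, ML*_G(x) ≤ ML_G(x) + 1. -/

import Mathlib

structure LoopGraph (V : Type) [Fintype V] [DecidableEq V] where
  N : V → Finset V
  symm : ∀ u v, u ∈ N v ↔ v ∈ N u

namespace LoopGraph

variable {V : Type} [Fintype V] [DecidableEq V]

/-- Indicator vector of a finite set of vertices, as a configuration over `F_2`. -/
def chi (S : Finset V) : V → ZMod 2 := fun u => if u ∈ S then 1 else 0

/-- One regular move of the sigma-game. -/
def RegStep (G : LoopGraph V) (x y : V → ZMod 2) : Prop :=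
  ∃ v, y = x + chi (G.N v)

/-- One valid move of the lit-only sigma-game. -/
def ValidStep (G : LoopGraph V) (x y : V → ZMod 2) : Prop :=
  ∃ v, x v = 1 ∧ y = x + chi (G.N v)

def RegReach (G : LoopGraph V) : (V → ZMod 2) → (V → ZMod 2) → Prop :=
  Relation.ReflTransGen G.RegStep

def ValidReach (G : LoopGraph V) : (V → ZMod 2) → (V → ZMod 2) → Prop :=
  Relation.ReflTransGen G.ValidStep

/-- The light number of a configuration. -/
def L (x : V → ZMod 2) : ℕ := (Finset.univ.filter fun v => x v = 1).card

/-- Minimum light number of a configuration for the sigma-game. -/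
noncomputable def ML (G : LoopGraph V) (x : V → ZMod 2) : ℕ :=
  sInf (L '' {y | G.RegReach x y})

/-- Minimum light number of a configuration for the lit-only sigma-game. -/
noncomputable def MLs (G : LoopGraph V) (x : V → ZMod 2) : ℕ :=
  sInf (L '' {y | G.ValidReach x y})

/-- Minimum light number of the sigma-game on `G`. -/
noncomputable def MLmax (G : LoopGraph V) : ℕ := ⨆ x, G.ML x

/-- Minimum light number of the lit-only sigma-game on `G`. -/
noncomputable def MLsmax (G : LoopGraph V) : ℕ := ⨆ x, G.MLs x

/-- Non-loop adjacency. -/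
def Adj (G : LoopGraph V) (u w : V) : Prop := u ≠ w ∧ w ∈ G.N u

def Connected (G : LoopGraph V) : Prop :=
  ∀ u w : V, Relation.ReflTransGen G.Adj u w

/-- Degree, counting non-loop edges only. -/
def deg (G : LoopGraph V) (v : V) : ℕ := ((G.N v).erase v).card

/-- Underlying simple graph (loops discarded). -/
def simple (G : LoopGraph V) : SimpleGraph V where
  Adj := G.Adj
  symm := by
    constructor
    intro u w h
    exact ⟨h.1.symm, (G.symm w u).mp h.2⟩
  loopless := by constructor; intro u h; exact h.1 rfl

/-- Induced subgraph on a finite vertex subset. -/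
def induce (G : LoopGraph V) (T : Finset V) : LoopGraph {u // u ∈ T} where
  N u := Finset.univ.filter fun w => w.val ∈ G.N u.val
  symm := by
    intro u w
    simp only [Finset.mem_filter, Finset.mem_univ, true_and]
    exact G.symm u.1 w.1

end LoopGraph
/-- Adjacency of the rake `P_{n,k}`. -/
def RakeAdj (n k : ℕ) : (Fin n ⊕ Fin k) → (Fin n ⊕ Fin k) → Prop
  | Sum.inl i, Sum.inl j => i.val + 1 = j.val ∨ j.val + 1 = i.val
  | Sum.inl i, Sum.inr _ => i.val + 1 = n
  | Sum.inr _, Sum.inl j => j.val + 1 = n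
  | Sum.inr _, Sum.inr _ => False
section RakeProof

open LoopGraph Sum

variable {n k : ℕ}

private lemma z2cases (a : ZMod 2) : a = 0 ∨ a = 1 := by revert a; decide

private lemma zadd_self (a : ZMod 2) : a + a = 0 := by revert a; decide

private lemma fadd_self (f : Fin n ⊕ Fin k → ZMod 2) : f + f = 0 := by
  funext u; exact zadd_self (f u)

/-- Dirac delta configuration. -/
def dlt (v : Fin n ⊕ Fin k) : Fin n ⊕ Fin k → ZMod 2 := fun u => if u = v then 1 else 0

/-- Total effect of pressing the (parity) set `T`. -/
def sg (G : LoopGraph (Fin n ⊕ Fin k)) (T : Fin n ⊕ Fin k → ZMod 2) :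
    Fin n ⊕ Fin k → ZMod 2 :=
  ∑ v : Fin n ⊕ Fin k, T v • chi (G.N v)

lemma sg_apply (G : LoopGraph (Fin n ⊕ Fin k)) (T : Fin n ⊕ Fin k → ZMod 2)
    (u : Fin n ⊕ Fin k) :
    sg G T u = ∑ v : Fin n ⊕ Fin k, T v * chi (G.N v) u := by
  simp [sg, Finset.sum_apply, Pi.smul_apply, smul_eq_mul]

lemma sg_zero (G : LoopGraph (Fin n ⊕ Fin k)) : sg G 0 = 0 := by
  simp [sg]

lemma sg_add (G : LoopGraph (Fin n ⊕ Fin k)) (T T' : Fin n ⊕ Fin k → ZMod 2) :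
    sg G (T + T') = sg G T + sg G T' := by
  simp [sg, add_smul, Finset.sum_add_distrib]

lemma sg_dlt (G : LoopGraph (Fin n ⊕ Fin k)) (v : Fin n ⊕ Fin k) :
    sg G (dlt v) = chi (G.N v) := by
  simp [sg, dlt, ite_smul, one_smul, zero_smul]

lemma sg_eq_zero_at (G : LoopGraph (Fin n ⊕ Fin k)) (T : Fin n ⊕ Fin k → ZMod 2)
    (u : Fin n ⊕ Fin k) (h : ∀ v, T v ≠ 0 → u ∉ G.N v) : sg G T u = 0 := by
  rw [sg_apply]
  apply Finset.sum_eq_zero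
  intro v _
  rcases z2cases (T v) with h0 | h1
  · simp [h0]
  · have hnm := h v (by rw [h1]; exact one_ne_zero)
    simp [chi, hnm]

lemma chi_of_mem {S : Finset (Fin n ⊕ Fin k)} {u : Fin n ⊕ Fin k} (h : u ∈ S) :
    chi S u = 1 := by simp [chi, h]

lemma chi_of_not_mem {S : Finset (Fin n ⊕ Fin k)} {u : Fin n ⊕ Fin k} (h : u ∉ S) :
    chi S u = 0 := by simp [chi, h]

lemma vstep (G : LoopGraph (Fin n ⊕ Fin k)) {c : Fin n ⊕ Fin k → ZMod 2}
    {v : Fin n ⊕ Fin k} (h : c v = 1) : G.ValidReach c (c + chi (G.N v)) :=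
  Relation.ReflTransGen.single ⟨v, h, rfl⟩

lemma L_le_of (z y : Fin n ⊕ Fin k → ZMod 2) (a : Fin n ⊕ Fin k)
    (h : ∀ u, u ≠ a → z u = 1 → y u = 1) : L z ≤ L y + 1 := by
  have hsub : (Finset.univ.filter fun u => z u = 1) ⊆
      insert a (Finset.univ.filter fun u => y u = 1) := by
    intro u hu
    simp only [Finset.mem_filter, Finset.mem_univ, true_and] at hu
    by_cases hua : u = a
    · simp [hua]
    · simp [Finset.mem_insert, h u hua hu]
  calc L z ≤ (insert a (Finset.univ.filter fun u => y u = 1)).card :=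
        Finset.card_le_card hsub
    _ ≤ (Finset.univ.filter fun u => y u = 1).card + 1 := Finset.card_insert_le _ _
    _ = L y + 1 := rfl

section withG

variable (G : LoopGraph (Fin n ⊕ Fin k))
variable (hN : ∀ u w, u ≠ w → (w ∈ G.N u ↔ RakeAdj n k u w))

include hN

lemma mem_N_path {a b : Fin n} (h : a.val + 1 = b.val ∨ b.val + 1 = a.val) :
    (inl a : Fin n ⊕ Fin k) ∈ G.N (inl b) := by
  have hne : (inl b : Fin n ⊕ Fin k) ≠ inl a := by
    intro he
    rw [inl.injEq] at he
    have := Fin.val_eq_of_eq he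
    omega
  exact (hN _ _ hne).mpr (by simpa [RakeAdj] using h.symm)

lemma not_mem_N_path {a b : Fin n} (hne : a ≠ b)
    (h : ¬(a.val + 1 = b.val ∨ b.val + 1 = a.val)) :
    (inl a : Fin n ⊕ Fin k) ∉ G.N (inl b) := by
  intro hm
  have hne' : (inl b : Fin n ⊕ Fin k) ≠ inl a := by
    simp only [ne_eq, inl.injEq]; exact fun he => hne he.symm
  have := (hN _ _ hne').mp hm
  simp only [RakeAdj] at this
  exact h this.symm

lemma mem_N_leaf {w : Fin k} {a : Fin n} (h : a.val + 1 = n) :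
    (inl a : Fin n ⊕ Fin k) ∈ G.N (inr w) :=
  (hN (inr w) (inl a) (by simp)).mpr (by simpa [RakeAdj] using h)

lemma not_mem_N_leaf {w : Fin k} {a : Fin n} (h : a.val + 1 ≠ n) :
    (inl a : Fin n ⊕ Fin k) ∉ G.N (inr w) := by
  intro hm
  exact h ((hN (inr w) (inl a) (by simp)).mp hm)

lemma not_mem_N_leaf_leaf {w w' : Fin k} (hne : w ≠ w') :
    (inr w : Fin n ⊕ Fin k) ∉ G.N (inr w') := by
  intro hm
  have hne' : (inr w' : Fin n ⊕ Fin k) ≠ inr w := by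
    simp only [ne_eq, inr.injEq]; exact fun he => hne he.symm
  exact (hN _ _ hne').mp hm

end withG

end RakeProof
section RakeProof2
open LoopGraph Sum

variable {n k : ℕ}
variable (G : LoopGraph (Fin n ⊕ Fin k))
variable (hN : ∀ u w, u ≠ w → (w ∈ G.N u ↔ RakeAdj n k u w))

include hN

/-- Walk a light from position `i+m` down to position `i`, pressing only path
vertices strictly above `i`. -/
lemma walk (i : ℕ) : ∀ (m : ℕ) (c : Fin n ⊕ Fin k → ZMod 2), i + m < n →
    (∀ j : Fin n, j.val = i + m → c (inl j) = 1) →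
    ∃ c' U, G.ValidReach c c' ∧ c' = c + sg G U ∧
      (∀ j : Fin n, U (inl j) ≠ 0 → i < j.val) ∧
      (∀ j : Fin n, j.val = i → c' (inl j) = 1) := by
  intro m
  induction m with
  | zero =>
    intro c him hc
    exact ⟨c, 0, Relation.ReflTransGen.refl, by rw [sg_zero]; simp,
      fun j hj => (hj rfl).elim, fun j hj => hc j (by omega)⟩
  | succ m ih =>
    intro c him hc
    have him' : i + m < n := by omega
    set a : Fin n := ⟨i + m, him'⟩ with ha
    set b : Fin n := ⟨i + m + 1, by omega⟩ with hb
    by_cases h1 : c (inl a) = 1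
    · exact ih c him' (fun j hj => by
        have : j = a := Fin.ext (by simpa [ha] using hj)
        rw [this]; exact h1)
    · -- press `b`
      have hcb : c (inl b) = 1 := hc b (by simp [hb]; omega)
      set c₂ : Fin n ⊕ Fin k → ZMod 2 := c + chi (G.N (inl b)) with hc₂
      have hstep : G.ValidReach c c₂ := vstep G hcb
      have hmem : (inl a : Fin n ⊕ Fin k) ∈ G.N (inl b) :=
        mem_N_path G hN (Or.inl (by simp [ha, hb]))
      have h2 : ∀ j : Fin n, j.val = i + m → c₂ (inl j) = 1 := by
        intro j hj
        have hja : j = a := Fin.ext (by simpa [ha] using hj)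
        rw [hja]
        have hc0 : c (inl a) = 0 := (z2cases _).resolve_right h1
        simp [hc₂, Pi.add_apply, hc0, chi_of_mem hmem]
      obtain ⟨c', U, hr, heq, hpath, hi'⟩ := ih c₂ him' h2
      refine ⟨c', U + dlt (inl b), hstep.trans hr, ?_, ?_, hi'⟩
      · rw [heq, hc₂, sg_add, sg_dlt]
        funext u
        simp only [Pi.add_apply]
        ring
      · intro j hj
        by_cases hjb : (inl j : Fin n ⊕ Fin k) = inl b
        · rw [inl.injEq] at hjb
          have := Fin.val_eq_of_eq hjb
          simp [hb] at this
          omega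
        · apply hpath j
          simpa [Pi.add_apply, dlt, hjb] using hj

/-- If there is a light anywhere in the active region `{vᵢ,…,vₙ} ∪ leaves`,
we can light vertex `i` pressing only path vertices above `i` (and leaves). -/
lemma transport (i : ℕ) (hi : i < n) (c : Fin n ⊕ Fin k → ZMod 2)
    (hl : (∃ j : Fin n, i ≤ j.val ∧ c (inl j) = 1) ∨ (∃ w : Fin k, c (inr w) = 1)) :
    ∃ c' U, G.ValidReach c c' ∧ c' = c + sg G U ∧
      (∀ j : Fin n, U (inl j) ≠ 0 → i < j.val) ∧
      (∀ j : Fin n, j.val = i → c' (inl j) = 1) := by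
  rcases hl with ⟨j, hij, hcj⟩ | ⟨w, hw⟩
  · obtain ⟨c', U, hr, heq, hpath, hi'⟩ := walk G hN i (j.val - i) c (by omega)
      (fun j' hj' => by
        have : j' = j := Fin.ext (by omega)
        rw [this]; exact hcj)
    exact ⟨c', U, hr, heq, hpath, hi'⟩
  · set last : Fin n := ⟨n - 1, by omega⟩ with hlast
    by_cases hcl : c (inl last) = 1
    · obtain ⟨c', U, hr, heq, hpath, hi'⟩ := walk G hN i (n - 1 - i) c (by omega)
        (fun j' hj' => by
          have : j' = last := Fin.ext (by simp [hlast]; omega)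
          rw [this]; exact hcl)
      exact ⟨c', U, hr, heq, hpath, hi'⟩
    · set c₂ : Fin n ⊕ Fin k → ZMod 2 := c + chi (G.N (inr w)) with hc₂
      have hstep : G.ValidReach c c₂ := vstep G hw
      have hmem : (inl last : Fin n ⊕ Fin k) ∈ G.N (inr w) :=
        mem_N_leaf G hN (by simp [hlast]; omega)
      have h2 : ∀ j : Fin n, j.val = i + (n - 1 - i) → c₂ (inl j) = 1 := by
        intro j hj
        have hjl : j = last := Fin.ext (by simp [hlast]; omega)
        rw [hjl]
        have hc0 : c (inl last) = 0 := (z2cases _).resolve_right hcl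
        simp [hc₂, Pi.add_apply, hc0, chi_of_mem hmem]
      obtain ⟨c', U, hr, heq, hpath, hi'⟩ := walk G hN i (n - 1 - i) c₂ (by omega) h2
      refine ⟨c', U + dlt (inr w), hstep.trans hr, ?_, ?_, hi'⟩
      · rw [heq, hc₂, sg_add, sg_dlt]
        funext u
        simp only [Pi.add_apply]
        ring
      · intro j hj
        apply hpath j
        simpa [Pi.add_apply, dlt] using hj

end RakeProof2
section RakeProof3
open LoopGraph Sum

variable {n k : ℕ}
variable (G : LoopGraph (Fin n ⊕ Fin k))
variable (hN : ∀ u w, u ≠ w → (w ∈ G.N u ↔ RakeAdj n k u w))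

include hN

/-- If no leaf in the remaining press set is lit, stopping now loses at most one light. -/
lemma endgame_done (hn : 1 ≤ n) (c T : Fin n ⊕ Fin k → ZMod 2)
    (hT : ∀ j : Fin n, T (inl j) = 0)
    (hD : ∀ w : Fin k, ¬(T (inr w) = 1 ∧ c (inr w) = 1)) :
    L c ≤ L (c + sg G T) + 1 := by
  apply L_le_of c (c + sg G T) (inl ⟨n - 1, by omega⟩)
  intro u hu hcu
  have hs : sg G T u = 0 := by
    apply sg_eq_zero_at
    intro v hv
    match v with
    | inl t => exact absurd (hT t) hv
    | inr w =>
      have hTw : T (inr w) = 1 := (z2cases _).resolve_left hv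
      match u with
      | inl j =>
        have hj : j.val + 1 ≠ n := by
          intro hj1
          apply hu
          congr 1
          exact Fin.ext (by simp; omega)
        exact not_mem_N_leaf G hN hj
      | inr w' =>
        have hww : w' ≠ w := by
          intro he
          rw [he] at hcu
          exact hD w ⟨hTw, hcu⟩
        exact not_mem_N_leaf_leaf G hN hww
  simp [Pi.add_apply, hs, hcu]

/-- The leaf endgame: clear all lit leaves that still need pressing. -/
lemma endgame (hn : 1 ≤ n) : ∀ (m : ℕ) (c T : Fin n ⊕ Fin k → ZMod 2),
    (Finset.univ.filter fun w : Fin k => T (inr w) = 1 ∧ c (inr w) = 1).card ≤ m →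
    (∀ j : Fin n, T (inl j) = 0) →
    ∃ z, G.ValidReach c z ∧ L z ≤ L (c + sg G T) + 1 := by
  intro m
  induction m with
  | zero =>
    intro c T hcard hT
    have hD : ∀ w : Fin k, ¬(T (inr w) = 1 ∧ c (inr w) = 1) := by
      intro w hw
      have : w ∈ Finset.univ.filter fun w : Fin k => T (inr w) = 1 ∧ c (inr w) = 1 := by
        simp [hw.1, hw.2]
      have := Finset.card_pos.mpr ⟨w, this⟩
      omega
    exact ⟨c, Relation.ReflTransGen.refl, endgame_done G hN hn c T hT hD⟩
  | succ m ih =>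
    intro c T hcard hT
    by_cases hD : ∃ w : Fin k, T (inr w) = 1 ∧ c (inr w) = 1
    · obtain ⟨w, hTw, hcw⟩ := hD
      set c₂ : Fin n ⊕ Fin k → ZMod 2 := c + chi (G.N (inr w)) with hc₂
      set T₂ : Fin n ⊕ Fin k → ZMod 2 := T + dlt (inr w) with hT₂
      have hstep : G.ValidReach c c₂ := vstep G hcw
      have key : c₂ + sg G T₂ = c + sg G T := by
        rw [hc₂, hT₂, sg_add, sg_dlt]
        funext u
        simp only [Pi.add_apply]
        have : ∀ a b d : ZMod 2, a + d + (b + d) = a + b + (d + d) := by intros; ring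
        rw [this, zadd_self, add_zero]
      have hT₂path : ∀ j : Fin n, T₂ (inl j) = 0 := by
        intro j
        simp [hT₂, Pi.add_apply, dlt, hT j]
      have hsub : (Finset.univ.filter fun w' : Fin k => T₂ (inr w') = 1 ∧ c₂ (inr w') = 1)
          ⊆ (Finset.univ.filter fun w' : Fin k =>
              T (inr w') = 1 ∧ c (inr w') = 1).erase w := by
        intro w' hw'
        simp only [Finset.mem_filter, Finset.mem_univ, true_and] at hw'
        have hww : w' ≠ w := by
          intro he
          rw [he] at hw'
          have : T₂ (inr w) = 0 := by
            simp [hT₂, Pi.add_apply, dlt, hTw]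
            decide
          rw [this] at hw'
          exact absurd hw'.1 (by decide)
        have hkeep : c₂ (inr w') = c (inr w') := by
          have : (inr w' : Fin n ⊕ Fin k) ∉ G.N (inr w) := not_mem_N_leaf_leaf G hN hww
          simp [hc₂, Pi.add_apply, chi_of_not_mem this]
        have hkeepT : T₂ (inr w') = T (inr w') := by
          simp [hT₂, Pi.add_apply, dlt, hww]
        rw [Finset.mem_erase]
        refine ⟨hww, ?_⟩
        simp only [Finset.mem_filter, Finset.mem_univ, true_and]
        exact ⟨by rw [← hkeepT]; exact hw'.1, by rw [← hkeep]; exact hw'.2⟩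
      have hmemw : w ∈ Finset.univ.filter fun w' : Fin k =>
          T (inr w') = 1 ∧ c (inr w') = 1 := by simp [hTw, hcw]
      have hcard₂ : (Finset.univ.filter fun w' : Fin k =>
          T₂ (inr w') = 1 ∧ c₂ (inr w') = 1).card ≤ m := by
        calc _ ≤ _ := Finset.card_le_card hsub
          _ = _ - 1 := Finset.card_erase_of_mem hmemw
          _ ≤ m := by omega
      obtain ⟨z, hr, hb⟩ := ih c₂ T₂ hcard₂ hT₂path
      exact ⟨z, hstep.trans hr, by rwa [key] at hb⟩
    · push_neg at hD
      refine ⟨c, Relation.ReflTransGen.refl, endgame_done G hN hn c T hT ?_⟩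
      intro w hw
      exact absurd hw.2 (by simpa using hD w hw.1)

/-- The main sweep along the path. -/
lemma stage (hn : 1 ≤ n) : ∀ (d i : ℕ), i + d = n → ∀ (c T : Fin n ⊕ Fin k → ZMod 2),
    (∀ j : Fin n, T (inl j) ≠ 0 → i ≤ j.val) →
    ∃ z, G.ValidReach c z ∧ L z ≤ L (c + sg G T) + 1 := by
  intro d
  induction d with
  | zero =>
    intro i hi c T hT
    apply endgame G hN hn
        (Finset.univ.filter fun w : Fin k => T (inr w) = 1 ∧ c (inr w) = 1).card c T le_rfl
    intro j
    by_contra hj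
    have := hT j hj
    omega
  | succ d ih =>
    intro i hi c T hT
    have hi' : i < n := by omega
    set fi : Fin n := ⟨i, hi'⟩ with hfi
    rcases z2cases (T (inl fi)) with hTi | hTi
    · refine ih (i + 1) (by omega) c T ?_
      intro j hj
      have h1 := hT j hj
      rcases eq_or_lt_of_le h1 with he | hlt
      · exfalso
        have : j = fi := Fin.ext (by simp [hfi]; omega)
        rw [this] at hj
        exact hj hTi
      · omega
    · by_cases hl : (∃ j : Fin n, i ≤ j.val ∧ c (inl j) = 1) ∨ (∃ w : Fin k, c (inr w) = 1)
      · obtain ⟨c₁, U, hr1, hceq, hU, hlit⟩ := transport G hN i hi' c hl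
        have hlit' : c₁ (inl fi) = 1 := hlit fi rfl
        set c₂ : Fin n ⊕ Fin k → ZMod 2 := c₁ + chi (G.N (inl fi)) with hc₂
        have hstep : G.ValidReach c₁ c₂ := vstep G hlit'
        set T₂ : Fin n ⊕ Fin k → ZMod 2 := T + U + dlt (inl fi) with hT₂
        have key : c₂ + sg G T₂ = c + sg G T := by
          rw [hc₂, hceq, hT₂, sg_add, sg_add, sg_dlt]
          funext u
          simp only [Pi.add_apply]
          have : ∀ a b d e : ZMod 2, a + d + e + (b + d + e) = a + b + (d + d) + (e + e) := by
            intros; ring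
          rw [this, zadd_self, zadd_self, add_zero, add_zero]
        have hUfi : U (inl fi) = 0 := by
          by_contra h
          have := hU fi h
          simp [hfi] at this
        have hT₂path : ∀ j : Fin n, T₂ (inl j) ≠ 0 → i + 1 ≤ j.val := by
          intro j hj
          by_contra hle
          rcases Nat.lt_or_ge j.val i with hlt | hge
          · have hTj : T (inl j) = 0 := by
              by_contra h; have := hT j h; omega
            have hUj : U (inl j) = 0 := by
              by_contra h; have := hU j h; omega
            have hdj : dlt (inl fi : Fin n ⊕ Fin k) (inl j) = 0 := by
              simp only [dlt, hfi]
              rw [if_neg]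
              intro he
              rw [inl.injEq] at he
              have h3 := Fin.val_eq_of_eq he
              simp at h3
              omega
            apply hj
            simp [hT₂, Pi.add_apply, hTj, hUj, hdj]
          · have hje : j = fi := Fin.ext (by simp [hfi]; omega)
            apply hj
            rw [hje]
            simp [hT₂, Pi.add_apply, hTi, hUfi, dlt]
            decide
        obtain ⟨z, hr2, hb⟩ := ih (i + 1) (by omega) c₂ T₂ hT₂path
        exact ⟨z, hr1.trans (hstep.trans hr2), by rwa [key] at hb⟩
      · push_neg at hl
        obtain ⟨hpathdark, hleafdark⟩ := hl
        refine ⟨c, Relation.ReflTransGen.refl, ?_⟩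
        apply L_le_of c (c + sg G T) (inl ⟨i - 1, by omega⟩)
        intro u hu hcu
        match u with
        | inr w => exact absurd hcu (hleafdark w)
        | inl j =>
          have hji : j.val < i := by
            by_contra h
            exact absurd hcu (hpathdark j (by omega))
          have hjne : j.val ≠ i - 1 := by
            intro he
            apply hu
            congr 1
            exact Fin.ext (by simpa using he)
          have hj2 : j.val + 1 < i := by omega
          have hs : sg G T (inl j) = 0 := by
            apply sg_eq_zero_at
            intro v hv
            match v with
            | inl t =>
              have hti : i ≤ t.val := hT t hv
              apply not_mem_N_path G hN
              · intro he
                have := Fin.val_eq_of_eq he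
                omega
              · omega
            | inr w =>
              apply not_mem_N_leaf G hN
              omega
          simp [Pi.add_apply, hs, hcu]

end RakeProof3
section RakeProof4
open LoopGraph Sum

variable {n k : ℕ}

lemma reg_orbit (G : LoopGraph (Fin n ⊕ Fin k)) (x y : Fin n ⊕ Fin k → ZMod 2)
    (h : G.RegReach x y) : ∃ T, y = x + sg G T := by
  have h' : Relation.ReflTransGen G.RegStep x y := h
  clear h
  induction h' with
  | refl => exact ⟨0, by rw [sg_zero]; simp⟩
  | tail hxy hstep ih =>
    obtain ⟨T, hT⟩ := ih
    obtain ⟨v, hv⟩ := hstep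
    refine ⟨T + dlt v, ?_⟩
    rw [hv, hT, sg_add, sg_dlt, add_assoc]

end RakeProof4
open LoopGraph in
theorem rake_MLs_le_ML_add_one
    (n k : ℕ) (hn : 1 ≤ n) (G : LoopGraph (Fin n ⊕ Fin k))
    (hN : ∀ u w, u ≠ w → (w ∈ G.N u ↔ RakeAdj n k u w))
    (x : (Fin n ⊕ Fin k) → ZMod 2) :
    G.MLs x ≤ G.ML x + 1 := by
  have hne : (L '' {y | G.RegReach x y}).Nonempty :=
    ⟨L x, x, Relation.ReflTransGen.refl, rfl⟩
  obtain ⟨y, hy, hLy⟩ := Nat.sInf_mem hne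
  obtain ⟨T, hT⟩ := reg_orbit G x y hy
  obtain ⟨z, hz, hb⟩ := stage G hN hn n 0 (by omega) x T (fun j _ => Nat.zero_le _)
  have h1 : G.MLs x ≤ L z := Nat.sInf_le ⟨z, hz, rfl⟩
  have h3 : G.ML x = L y := hLy.symm
  rw [← hT] at hb
  omega
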